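/- Let Y be Bernoulli with success probability p₀(v) = (ξ/ψ₀)e^{−ψ₀ v} (0 < ξ ≤ ψ₀, v ≥ 0, p₀(v) < 1), and for ψ > ξ let ℓ(ψ) = Y(log ξ − log ψ − ψv) + (1−Y)log(1 − (ξ/ψ)e^{−ψv}). Then the second derivative of ψ ↦ E[ℓ(ψ)] evaluated at ψ = ψ₀ equals −p₀(v)(1/ψ₀ + v)²/(1 − p₀(v)). -/

import Mathlib

open MeasureTheory

/-- derivative of `ψ ↦ ξ/ψ * exp(-ψ v)` -/
lemma hasDerivAt_g_aux (ξ v ψ : ℝ) (hψ : ψ ≠ 0) :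
    HasDerivAt (fun ψ => ξ / ψ * Real.exp (-ψ * v))
      (-(ξ / ψ * Real.exp (-ψ * v)) * (ψ⁻¹ + v)) ψ := by
  have h1 : HasDerivAt (fun ψ : ℝ => ξ / ψ) (ξ * -(ψ ^ 2)⁻¹) ψ := by
    simpa [div_eq_mul_inv] using (hasDerivAt_inv hψ).const_mul ξ
  have h2 : HasDerivAt (fun ψ : ℝ => Real.exp (-ψ * v)) (Real.exp (-ψ * v) * (-1 * v)) ψ :=
    (((hasDerivAt_id ψ).neg).mul_const v).exp
  have := h1.mul h2
  refine this.congr_deriv ?_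
  field_simp
  ring

lemma key_first (ξ p v ψ : ℝ) (hψ : ψ ≠ 0)
    (hg : ξ / ψ * Real.exp (-ψ * v) < 1) :
    HasDerivAt (fun ψ => p * (Real.log ξ - Real.log ψ - ψ * v)
        + (1 - p) * Real.log (1 - ξ / ψ * Real.exp (-ψ * v)))
      (p * (-ψ⁻¹ - v) + (1 - p) * (ξ / ψ * Real.exp (-ψ * v) * (ψ⁻¹ + v)
          / (1 - ξ / ψ * Real.exp (-ψ * v)))) ψ := by
  have hne : 1 - ξ / ψ * Real.exp (-ψ * v) ≠ 0 := by linarith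
  have hA : HasDerivAt (fun ψ => p * (Real.log ξ - Real.log ψ - ψ * v)) (p * (-ψ⁻¹ - v)) ψ := by
    have hmv : HasDerivAt (fun ψ : ℝ => ψ * v) v ψ := by
      simpa using (hasDerivAt_id ψ).mul_const v
    have : HasDerivAt (fun ψ : ℝ => Real.log ξ - Real.log ψ - ψ * v) (0 - ψ⁻¹ - v) ψ :=
      ((hasDerivAt_const ψ (Real.log ξ)).sub (Real.hasDerivAt_log hψ)).sub hmv
    simpa [zero_sub, neg_sub] using this.const_mul p
  have hg' := hasDerivAt_g_aux ξ v ψ hψ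
  have hD : HasDerivAt (fun ψ => 1 - ξ / ψ * Real.exp (-ψ * v))
      (ξ / ψ * Real.exp (-ψ * v) * (ψ⁻¹ + v)) ψ := by
    simpa using hg'.const_sub 1
  have hB := (hD.log hne).const_mul (1 - p)
  exact hA.add hB

lemma key_second (ξ p v ψ : ℝ) (hψ : ψ ≠ 0)
    (hg : ξ / ψ * Real.exp (-ψ * v) < 1) :
    HasDerivAt (fun ψ => p * (-ψ⁻¹ - v) + (1 - p) * (ξ / ψ * Real.exp (-ψ * v) * (ψ⁻¹ + v)
          / (1 - ξ / ψ * Real.exp (-ψ * v))))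
      (p * (ψ ^ 2)⁻¹ + (1 - p) *
        (((-(ξ / ψ * Real.exp (-ψ * v)) * (ψ⁻¹ + v) * (ψ⁻¹ + v)
            + ξ / ψ * Real.exp (-ψ * v) * (-(ψ ^ 2)⁻¹)) * (1 - ξ / ψ * Real.exp (-ψ * v))
          - ξ / ψ * Real.exp (-ψ * v) * (ψ⁻¹ + v) * (-(-(ξ / ψ * Real.exp (-ψ * v)) * (ψ⁻¹ + v))))
          / (1 - ξ / ψ * Real.exp (-ψ * v)) ^ 2)) ψ := by
  have hne : 1 - ξ / ψ * Real.exp (-ψ * v) ≠ 0 := by linarith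
  have hA : HasDerivAt (fun ψ : ℝ => p * (-ψ⁻¹ - v)) (p * (ψ ^ 2)⁻¹) ψ := by
    have : HasDerivAt (fun ψ : ℝ => -ψ⁻¹ - v) (-(-(ψ ^ 2)⁻¹) - 0) ψ :=
      (hasDerivAt_inv hψ).neg.sub (hasDerivAt_const ψ v)
    simpa using this.const_mul p
  have hg' := hasDerivAt_g_aux ξ v ψ hψ
  have hN : HasDerivAt (fun ψ => ξ / ψ * Real.exp (-ψ * v) * (ψ⁻¹ + v))
      (-(ξ / ψ * Real.exp (-ψ * v)) * (ψ⁻¹ + v) * (ψ⁻¹ + v)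
        + ξ / ψ * Real.exp (-ψ * v) * (-(ψ ^ 2)⁻¹ + 0)) ψ :=
    hg'.mul ((hasDerivAt_inv hψ).add (hasDerivAt_const ψ v))
  have hD : HasDerivAt (fun ψ => 1 - ξ / ψ * Real.exp (-ψ * v))
      (-(-(ξ / ψ * Real.exp (-ψ * v)) * (ψ⁻¹ + v))) ψ := hg'.const_sub 1
  have := hA.add (((hN.div hD hne).const_mul (1 - p)))
  refine this.congr_deriv ?_
  ring

theorem expected_loglikelihood_second_derivative {Ω : Type*} [MeasurableSpace Ω]
    (μ : Measure Ω) [IsProbabilityMeasure μ]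
    (ξ ψ₀ v : ℝ) (hξ : 0 < ξ) (hψ₀ : ξ ≤ ψ₀) (hv : 0 ≤ v)
    (hp1 : ξ / ψ₀ * Real.exp (-ψ₀ * v) < 1)
    (Y : Ω → ℝ) (hY : Measurable Y) (hY01 : ∀ ω, Y ω = 0 ∨ Y ω = 1)
    (hp : ∫ ω, Y ω ∂μ = ξ / ψ₀ * Real.exp (-ψ₀ * v)) :
    deriv (deriv (fun ψ => ∫ ω, (Y ω * (Real.log ξ - Real.log ψ - ψ * v)
        + (1 - Y ω) * Real.log (1 - ξ / ψ * Real.exp (-ψ * v))) ∂μ)) ψ₀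
      = -(ξ / ψ₀ * Real.exp (-ψ₀ * v) * (1 / ψ₀ + v) ^ 2
          / (1 - ξ / ψ₀ * Real.exp (-ψ₀ * v))) := by
  set p := ξ / ψ₀ * Real.exp (-ψ₀ * v) with hpdef
  have hψ0pos : 0 < ψ₀ := lt_of_lt_of_le hξ hψ₀
  have hψne : ψ₀ ≠ 0 := ne_of_gt hψ0pos
  have hppos : 0 < p := mul_pos (div_pos hξ hψ0pos) (Real.exp_pos _)
  have h1p : (0:ℝ) < 1 - p := by linarith
  -- step 1 : integrability of Y
  have hYb : ∀ ω, ‖Y ω‖ ≤ 1 := by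
    intro ω; rcases hY01 ω with h | h <;> simp [h]
  have hYint : Integrable Y μ :=
    Integrable.mono' (integrable_const 1) hY.aestronglyMeasurable
      (Filter.Eventually.of_forall hYb)
  -- step 2 : rewrite the integral
  have hfun : (fun ψ => ∫ ω, (Y ω * (Real.log ξ - Real.log ψ - ψ * v)
        + (1 - Y ω) * Real.log (1 - ξ / ψ * Real.exp (-ψ * v))) ∂μ)
      = (fun ψ => p * (Real.log ξ - Real.log ψ - ψ * v)
        + (1 - p) * Real.log (1 - ξ / ψ * Real.exp (-ψ * v))) := by
    funext ψ
    have hi1 : Integrable (fun ω => Y ω * (Real.log ξ - Real.log ψ - ψ * v)) μ :=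
      hYint.mul_const _
    have hi2 : Integrable
        (fun ω => (1 - Y ω) * Real.log (1 - ξ / ψ * Real.exp (-ψ * v))) μ :=
      ((integrable_const 1).sub hYint).mul_const _
    have hsub : ∫ ω, (1 - Y ω) ∂μ = 1 - p := by
      rw [integral_sub (integrable_const 1) hYint, hp]; simp
    rw [integral_add hi1 hi2, integral_mul_const, integral_mul_const, hp, hsub]
  rw [hfun]
  -- step 3 : first derivative on a neighborhood
  have h1 : ∀ᶠ ψ in nhds ψ₀, (0:ℝ) < ψ := eventually_gt_nhds hψ0pos
  have hc : ContinuousAt (fun ψ : ℝ => ξ / ψ * Real.exp (-ψ * v)) ψ₀ := by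
    exact ((continuousAt_const.div continuousAt_id hψne).mul
      ((Real.continuous_exp.comp (continuous_neg.mul continuous_const)).continuousAt))
  have h2 : ∀ᶠ ψ in nhds ψ₀, ξ / ψ * Real.exp (-ψ * v) < 1 :=
    hc.eventually_lt_const hp1
  have hev : deriv (fun ψ => p * (Real.log ξ - Real.log ψ - ψ * v)
        + (1 - p) * Real.log (1 - ξ / ψ * Real.exp (-ψ * v)))
      =ᶠ[nhds ψ₀] (fun ψ => p * (-ψ⁻¹ - v) + (1 - p) * (ξ / ψ * Real.exp (-ψ * v) * (ψ⁻¹ + v)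
          / (1 - ξ / ψ * Real.exp (-ψ * v)))) := by
    filter_upwards [h1, h2] with ψ hψpos hψlt
    exact (key_first ξ p v ψ (ne_of_gt hψpos) hψlt).deriv
  rw [hev.deriv_eq]
  rw [(key_second ξ p v ψ₀ hψne hp1).deriv]
  have hne : 1 - p ≠ 0 := ne_of_gt h1p
  rw [← hpdef]
  field_simp
  ring
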